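/- Let Λ be a non-ordinary numerical semigroup and let d be the gcd of the left elements of Λ (the elements smaller than the conductor). If d = 1, then every numerical semigroup containing the left elements of Λ contains the numerical semigroup generated by the left elements, and consequently Λ has only finitely many descendants in the semigroup tree; in particular Λ does not lie in any infinite chain. -/

import Mathlib

def IsNumSgp (S : Set ℕ) : Prop :=
  0 ∈ S ∧ (∀ a ∈ S, ∀ b ∈ S, a + b ∈ S) ∧ Sᶜ.Finite

noncomputable def multNS (S : Set ℕ) : ℕ := sInf {x | x ∈ S ∧ x ≠ 0}

noncomputable def condNS (S : Set ℕ) : ℕ := sInf {c : ℕ | ∀ n, c ≤ n → n ∈ S}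

noncomputable def genusNS (S : Set ℕ) : ℕ := Sᶜ.ncard

def IsMinGen (S : Set ℕ) (a : ℕ) : Prop :=
  a ∈ S ∧ a ≠ 0 ∧ ¬ ∃ x ∈ S, ∃ y ∈ S, x ≠ 0 ∧ y ≠ 0 ∧ x + y = a

def leftElts (S : Set ℕ) : Set ℕ := {x | x ∈ S ∧ x < condNS S}

def IsOrdinary (S : Set ℕ) : Prop := ∃ m : ℕ, S = {0} ∪ {n | m ≤ n}

def IsChild (S C : Set ℕ) : Prop :=
  ∃ a, IsMinGen S a ∧ condNS S ≤ a ∧ C = S \ {a}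

def IsDescendant (S T : Set ℕ) : Prop := Relation.ReflTransGen IsChild S T

def pushNS (m : ℕ) (S : Set ℕ) : Set ℕ := {0} ∪ (fun x => m + x) '' S

lemma numsgp_exists_cond {T : Set ℕ} (hfin : Tᶜ.Finite) : ∃ c, ∀ n, c ≤ n → n ∈ T := by
  obtain ⟨b, hb⟩ := hfin.bddAbove
  refine ⟨b + 1, fun n hn => ?_⟩
  by_contra hmem
  exact absurd (hb hmem) (by omega)

lemma cond_mono {T S : Set ℕ} (hTS : T ⊆ S) (hfin : Tᶜ.Finite) : condNS S ≤ condNS T :=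
  csInf_le_csInf (OrderBot.bddBelow _) (numsgp_exists_cond hfin)
    (fun _c hc n hn => hTS (hc n hn))

lemma child_numsgp {T C : Set ℕ} (hT : IsNumSgp T) (hc : IsChild T C) : IsNumSgp C := by
  obtain ⟨a, ⟨haT, ha0, hmin⟩, _, rfl⟩ := hc
  refine ⟨⟨hT.1, fun h => ha0 h.symm⟩, ?_, ?_⟩
  · rintro x ⟨hx, hxa⟩ y ⟨hy, hya⟩
    refine ⟨hT.2.1 x hx y hy, fun hs : x + y = a => ?_⟩
    rcases Nat.eq_zero_or_pos x with hx0 | hx0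
    · exact hya (Set.mem_singleton_iff.mpr (by omega))
    rcases Nat.eq_zero_or_pos y with hy0 | hy0
    · exact hxa (Set.mem_singleton_iff.mpr (by omega))
    exact hmin ⟨x, hx, y, hy, by omega, by omega, hs⟩
  · have : (T \ {a})ᶜ = Tᶜ ∪ {a} := by
      ext x; simp [Set.diff_eq, Set.mem_compl_iff]; tauto
    rw [this]
    exact hT.2.2.union (Set.finite_singleton a)

lemma desc_invariant {S T : Set ℕ} (hS : IsNumSgp S) (hdes : IsDescendant S T) :
    IsNumSgp T ∧ leftElts S ⊆ T ∧ T ⊆ S := by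
  induction hdes with
  | refl => exact ⟨hS, fun x hx => hx.1, subset_rfl⟩
  | tail _hst hchild ih =>
    obtain ⟨hTn, hleft, hsub⟩ := ih
    refine ⟨child_numsgp hTn hchild, ?_, ?_⟩
    · obtain ⟨a, hgen, hca, rfl⟩ := hchild
      intro x hx
      refine ⟨hleft hx, ?_⟩
      have h1 : x < condNS S := hx.2
      have h2 : condNS S ≤ condNS _ := cond_mono hsub hTn.2.2
      simp only [Set.mem_singleton_iff]
      omega
    · obtain ⟨a, hgen, hca, rfl⟩ := hchild
      exact fun x hx => hsub hx.1

lemma part1 (S : Set ℕ) : ∀ T : Set ℕ, IsNumSgp T → leftElts S ⊆ T →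
    (AddSubmonoid.closure (leftElts S) : Set ℕ) ⊆ T := by
  intro T hT hsub
  have : AddSubmonoid.closure (leftElts S) ≤
      ⟨⟨T, fun {a b} ha hb => hT.2.1 a ha b hb⟩, hT.1⟩ :=
    AddSubmonoid.closure_le.mpr hsub
  exact this

/-- From gcd-1-type hypothesis, the closure contains consecutive elements. -/
lemma exists_consecutive (S : Set ℕ)
    (hd : ∀ e : ℕ, (∀ x ∈ leftElts S, e ∣ x) → e = 1) :
    ∃ Q : ℕ, Q ∈ AddSubmonoid.closure (leftElts S) ∧
      Q + 1 ∈ AddSubmonoid.closure (leftElts S) := by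
  set A : Set ℤ := ((↑) : ℕ → ℤ) '' leftElts S with hA
  -- 1 ∈ AddSubgroup.closure A
  have h1 : (1 : ℤ) ∈ AddSubgroup.closure A := by
    obtain ⟨g, hg⟩ := Int.subgroup_cyclic (AddSubgroup.closure A)
    have hdvd : ∀ x ∈ leftElts S, g.natAbs ∣ x := by
      intro x hx
      have : (x : ℤ) ∈ AddSubgroup.closure A :=
        AddSubgroup.subset_closure ⟨x, hx, rfl⟩
      rw [hg, AddSubgroup.mem_closure_singleton] at this
      obtain ⟨n, hn⟩ := this
      have : g ∣ (x : ℤ) := ⟨n, by rw [← hn, smul_eq_mul]; ring⟩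
      exact Int.natAbs_dvd_natAbs.mpr (by simpa using this)
    have := hd _ hdvd
    have hg1 : g = 1 ∨ g = -1 := by omega
    rw [hg, AddSubgroup.mem_closure_singleton]
    rcases hg1 with rfl | rfl
    · exact ⟨1, by simp⟩
    · exact ⟨-1, by simp⟩
  -- every element of the subgroup closure is a difference of submonoid-closure elts
  have hdiff : ∀ z ∈ AddSubgroup.closure A,
      ∃ p ∈ AddSubmonoid.closure A, ∃ q ∈ AddSubmonoid.closure A, z = p - q := by
    intro z hz
    induction hz using AddSubgroup.closure_induction with
    | mem x hx => exact ⟨x, AddSubmonoid.subset_closure hx, 0, zero_mem _, by ring⟩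
    | zero => exact ⟨0, zero_mem _, 0, zero_mem _, by ring⟩
    | add x y hx hy ihx ihy =>
      obtain ⟨p, hp, q, hq, rfl⟩ := ihx
      obtain ⟨p', hp', q', hq', rfl⟩ := ihy
      exact ⟨p + p', add_mem hp hp', q + q', add_mem hq hq', by ring⟩
    | neg x hx ihx =>
      obtain ⟨p, hp, q, hq, rfl⟩ := ihx
      exact ⟨q, hq, p, hp, by ring⟩
  obtain ⟨p, hp, q, hq, hpq⟩ := hdiff 1 h1
  -- pull back to ℕ
  have hmap : AddSubmonoid.closure A =
      AddSubmonoid.map (Nat.castAddMonoidHom ℤ) (AddSubmonoid.closure (leftElts S)) := by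
    rw [AddMonoidHom.map_mclosure]; rfl
  rw [hmap] at hp hq
  obtain ⟨P, hP, hPe⟩ := hp
  obtain ⟨Q, hQ, hQe⟩ := hq
  refine ⟨Q, hQ, ?_⟩
  have : P = Q + 1 := by
    have hPe' : (P : ℤ) = p := hPe
    have hQe' : (Q : ℤ) = q := hQe
    have : (P : ℤ) = (Q : ℤ) + 1 := by omega
    exact_mod_cast this
  rwa [← this]

lemma consecutive_cofinite {M : AddSubmonoid ℕ} {Q : ℕ} (hQ : Q ∈ M) (hQ1 : Q + 1 ∈ M) :
    ∀ n, Q * Q ≤ n → n ∈ M := by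
  intro n hn
  rcases Nat.eq_zero_or_pos Q with rfl | hQpos
  · simpa using nsmul_mem hQ1 n
  · set q := n / Q with hq
    set r := n % Q with hr
    have hdm : Q * q + r = n := Nat.div_add_mod n Q
    have hrQ : r < Q := Nat.mod_lt n hQpos
    have hqQ : Q ≤ q := Nat.le_div_iff_mul_le hQpos |>.mpr (by omega)
    have hrq : r ≤ q := by omega
    have hmem : (q - r) • Q + r • (Q + 1) ∈ M := add_mem (nsmul_mem hQ (q - r)) (nsmul_mem hQ1 r)
    have heq : (q - r) * Q + r * (Q + 1) = q * Q + r := by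
      have h := Nat.sub_add_cancel hrq
      calc (q - r) * Q + r * (Q + 1) = ((q - r) + r) * Q + r := by ring
        _ = q * Q + r := by rw [h]
    simp only [smul_eq_mul] at hmem
    rw [heq, Nat.mul_comm q Q, hdm] at hmem
    exact hmem

theorem stmt6 (S : Set ℕ) (h : IsNumSgp S) (hno : ¬ IsOrdinary S)
    (hd : ∀ e : ℕ, (∀ x ∈ leftElts S, e ∣ x) → e = 1) :
    (∀ T : Set ℕ, IsNumSgp T → leftElts S ⊆ T →
      (AddSubmonoid.closure (leftElts S) : Set ℕ) ⊆ T) ∧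
    {T | IsDescendant S T}.Finite := by
  refine ⟨part1 S, ?_⟩
  obtain ⟨Q, hQ, hQ1⟩ := exists_consecutive S hd
  set L : Set ℕ := (AddSubmonoid.closure (leftElts S) : Set ℕ) with hLdef
  have hLco : Lᶜ.Finite := by
    apply Set.Finite.subset (Set.finite_Iio (Q * Q))
    intro x hx
    by_contra hxlt
    exact hx (consecutive_cofinite hQ hQ1 x (by simpa [Set.mem_Iio] using hxlt))
  have hsub : {T | IsDescendant S T} ⊆ (fun u => L ∪ u) '' {u | u ⊆ Lᶜ} := by
    intro T hT
    obtain ⟨hTn, hleft, hTS⟩ := desc_invariant h hT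
    have hLT : L ⊆ T := part1 S T hTn hleft
    refine ⟨T \ L, fun x hx => hx.2, ?_⟩
    ext x
    constructor
    · rintro (hx | hx)
      · exact hLT hx
      · exact hx.1
    · intro hx
      by_cases hxL : x ∈ L
      · exact Or.inl hxL
      · exact Or.inr ⟨hx, hxL⟩
  exact Set.Finite.subset (Set.Finite.image _ hLco.finite_subsets) hsub
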